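/- arXiv:1310.8093 — 6 statements merged into one kernel-verified Lean document; each statement's English description precedes it below -/
import Mathlib

section
/- For the entropy function η_m(ρ,u) = ρ c_λ ∫_{-1}^{1} (u + z ρ^θ)^{2m} (1-z^2)^λ dz with λ > 0, θ > 0, c_λ = (∫_{-1}^1 (1-z^2)^λ dz)^{-1}, there exist positive constants C₁(m), C₂(m) such that C₁(m) ρ (u^{2m} + ρ^{2mθ}) ≤ η_m(ρ,u) ≤ C₂(m) ρ (u^{2m} + ρ^{2mθ}) for all ρ ≥ 0 and u ∈ ℝ. -/
open MeasureTheory intervalIntegral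

/-- The entropy `η_m(ρ,u) = ρ c_λ ∫_{-1}^1 (u + z ρ^θ)^{2m} (1-z^2)^λ dz`,
with `c_λ = (∫_{-1}^1 (1-z^2)^λ dz)⁻¹`. -/
noncomputable def entropyEta (θ lam : ℝ) (m : ℕ) (ρ u : ℝ) : ℝ :=
  ρ * (∫ z in (-1 : ℝ)..1, (1 - z ^ 2) ^ lam)⁻¹ *
    ∫ z in (-1 : ℝ)..1, (u + z * ρ ^ θ) ^ (2 * m) * (1 - z ^ 2) ^ lam

lemma entropy_pow_add_le (a b : ℝ) (ha : 0 ≤ a) (hb : 0 ≤ b) (n : ℕ) :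
    (a + b) ^ n ≤ 2 ^ n * (a ^ n + b ^ n) := by
  calc (a + b) ^ n ≤ (2 * max a b) ^ n := by
        apply pow_le_pow_left₀ (by positivity)
        rcases le_total a b with h | h
        · simp [max_eq_right h]; linarith
        · simp [max_eq_left h]; linarith
    _ = 2 ^ n * (max a b) ^ n := by rw [mul_pow]
    _ ≤ 2 ^ n * (a ^ n + b ^ n) := by
        gcongr 2 ^ n * ?_
        rcases le_total a b with h | h
        · rw [max_eq_right h]; exact le_add_of_nonneg_left (by positivity)
        · rw [max_eq_left h]; exact le_add_of_nonneg_right (by positivity)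

lemma entropy_sub_integral_le {f : ℝ → ℝ} (hf : Continuous f)
    (hnn : ∀ x ∈ Set.Icc (-1 : ℝ) 1, 0 ≤ f x) {a b : ℝ}
    (ha : -1 ≤ a) (hab : a ≤ b) (hb : b ≤ 1) :
    ∫ x in a..b, f x ≤ ∫ x in (-1 : ℝ)..1, f x := by
  have hint : ∀ c d : ℝ, IntervalIntegrable f volume c d := fun c d =>
    hf.intervalIntegrable c d
  have h1 : ∫ x in (-1 : ℝ)..1, f x
      = (∫ x in (-1 : ℝ)..a, f x) + (∫ x in a..b, f x) + ∫ x in b..(1 : ℝ), f x := by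
    rw [integral_add_adjacent_intervals (hint _ _) (hint _ _),
      integral_add_adjacent_intervals (hint _ _) (hint _ _)]
  have h2 : 0 ≤ ∫ x in (-1 : ℝ)..a, f x :=
    intervalIntegral.integral_nonneg ha fun x hx =>
      hnn x ⟨hx.1, hx.2.trans (hab.trans hb)⟩
  have h3 : 0 ≤ ∫ x in b..(1 : ℝ), f x :=
    intervalIntegral.integral_nonneg hb fun x hx =>
      hnn x ⟨le_trans (ha.trans hab) hx.1, hx.2⟩
  rw [h1]; linarith

set_option maxHeartbeats 1000000 in
/-- Two-sided comparison `η_m(ρ,u) ≍ ρ (u^{2m} + ρ^{2mθ})`. -/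
theorem stmt0 (θ lam : ℝ) (hθ : 0 < θ) (hlam : 0 < lam) (m : ℕ) :
    ∃ C₁ C₂ : ℝ, 0 < C₁ ∧ 0 < C₂ ∧ ∀ ρ u : ℝ, 0 ≤ ρ →
      C₁ * (ρ * (u ^ (2 * m) + ρ ^ (2 * (m : ℝ) * θ))) ≤ entropyEta θ lam m ρ u ∧
      entropyEta θ lam m ρ u ≤ C₂ * (ρ * (u ^ (2 * m) + ρ ^ (2 * (m : ℝ) * θ))) := by
  -- the weight function
  set g : ℝ → ℝ := fun z => (1 - z ^ 2) ^ lam with hg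
  have hgcont : Continuous g := by
    exact (Real.continuous_rpow_const hlam.le).comp (by continuity)
  have hgint : ∀ a b : ℝ, IntervalIntegrable g volume a b := fun a b =>
    hgcont.intervalIntegrable a b
  have hgnn : ∀ z : ℝ, z ∈ Set.Icc (-1 : ℝ) 1 → 0 ≤ g z := by
    intro z hz
    apply Real.rpow_nonneg
    nlinarith [hz.1, hz.2]
  have hgpos : ∀ z : ℝ, z ∈ Set.Ioo (-1 : ℝ) 1 → 0 < g z := by
    intro z hz
    apply Real.rpow_pos_of_pos
    nlinarith [hz.1, hz.2]
  set I : ℝ := ∫ z in (-1 : ℝ)..1, g z with hIdef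
  have hI : 0 < I :=
    intervalIntegral_pos_of_pos_on (hgint _ _) hgpos (by norm_num)
  set δ₁ : ℝ := ∫ z in (1/2 : ℝ)..(3/4 : ℝ), g z with hδ₁def
  set δ₂ : ℝ := ∫ z in (-3/4 : ℝ)..(-1/2 : ℝ), g z with hδ₂def
  have hδ₁ : 0 < δ₁ := by
    apply intervalIntegral_pos_of_pos_on (hgint _ _) _ (by norm_num)
    intro x hx
    apply Real.rpow_pos_of_pos
    nlinarith [hx.1, hx.2]
  have hδ₂ : 0 < δ₂ := by
    apply intervalIntegral_pos_of_pos_on (hgint _ _) _ (by norm_num)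
    intro x hx
    apply Real.rpow_pos_of_pos
    nlinarith [hx.1, hx.2]
  set δ : ℝ := min δ₁ δ₂ with hδdef
  have hδ : 0 < δ := lt_min hδ₁ hδ₂
  refine ⟨min (1 / (2 * 4 ^ m)) (δ * I⁻¹ / (4 ^ m * (4 ^ m + 1))),
    2 ^ (2 * m), lt_min (by positivity) (by positivity), by positivity, ?_⟩
  intro ρ u hρ
  set X : ℝ := ρ ^ θ with hXdef
  have hX : 0 ≤ X := Real.rpow_nonneg hρ θ
  have hev : ∀ x : ℝ, 0 ≤ x ^ (2 * m) := fun x => (even_two_mul m).pow_nonneg x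
  set F : ℝ → ℝ := fun z => (u + z * X) ^ (2 * m) * g z with hF
  have hFcont : Continuous F := by
    apply Continuous.mul _ hgcont
    continuity
  have hFint : ∀ a b : ℝ, IntervalIntegrable F volume a b := fun a b =>
    hFcont.intervalIntegrable a b
  have hFnn : ∀ z : ℝ, z ∈ Set.Icc (-1 : ℝ) 1 → 0 ≤ F z := by
    intro z hz
    exact mul_nonneg (hev _) (hgnn z hz)
  have hηeq : entropyEta θ lam m ρ u = ρ * I⁻¹ * ∫ z in (-1 : ℝ)..1, F z := rfl
  set P : ℝ := X ^ (2 * m) with hPdef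
  have hPnn : 0 ≤ P := by positivity
  have hPeq : ρ ^ (2 * (m : ℝ) * θ) = P := by
    rw [hPdef, hXdef, ← Real.rpow_natCast (ρ ^ θ) (2 * m), ← Real.rpow_mul hρ]
    congr 1
    push_cast
    ring
  have hu2 : (0:ℝ) ≤ u ^ (2 * m) := hev u
  have habs : |u| ^ (2 * m) = u ^ (2 * m) := by
    rw [← abs_pow, abs_of_nonneg hu2]
  constructor
  · -- lower bound
    rw [hηeq, hPeq]
    rcases le_total (2 * X) |u| with hcase | hcase
    · -- |u| ≥ 2X : the integrand is at least (|u|/2)^(2m) pointwise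
      have key : (|u| / 2) ^ (2 * m) * I ≤ ∫ z in (-1 : ℝ)..1, F z := by
        have := intervalIntegral.integral_mono_on (a := (-1:ℝ)) (b := 1)
          (by norm_num) ((hgint (-1) 1).const_mul ((|u| / 2) ^ (2 * m))) (hFint _ _) ?_
        · simpa [intervalIntegral.integral_const_mul] using this
        · intro z hz
          have h1 : |u| / 2 ≤ |u + z * X| := by
            have hz1 : |z * X| ≤ X := by
              rw [abs_mul, abs_of_nonneg hX]
              exact mul_le_of_le_one_left hX (abs_le.mpr ⟨hz.1, hz.2⟩)
            have htri : |u| ≤ |u + z * X| + |z * X| := by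
              calc |u| = |(u + z * X) - z * X| := by ring_nf
                _ ≤ |u + z * X| + |z * X| := abs_sub _ _
            linarith
          have h2 : (|u| / 2) ^ (2 * m) ≤ |u + z * X| ^ (2 * m) :=
            pow_le_pow_left₀ (by positivity) h1 (2 * m)
          have h3 : |u + z * X| ^ (2 * m) = (u + z * X) ^ (2 * m) := by
            rw [← abs_pow, abs_of_nonneg (hev _)]
          rw [hF]
          calc (|u| / 2) ^ (2 * m) * g z ≤ |u + z * X| ^ (2 * m) * g z := by
                exact mul_le_mul_of_nonneg_right h2 (hgnn z hz)
            _ = (u + z * X) ^ (2 * m) * g z := by rw [h3]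
      have hP2 : P ≤ u ^ (2 * m) := by
        rw [hPdef, ← habs]
        calc X ^ (2 * m) ≤ (|u| / 2) ^ (2 * m) :=
              pow_le_pow_left₀ hX (by linarith) _
          _ ≤ |u| ^ (2 * m) := pow_le_pow_left₀ (by positivity) (by
              have := abs_nonneg u; linarith) _
      have hmid : (|u| / 2) ^ (2 * m) = u ^ (2 * m) / 4 ^ m := by
        rw [div_pow, ← habs]
        congr 1
        rw [pow_mul]
        norm_num
      have hC : min (1 / (2 * 4 ^ m)) (δ * I⁻¹ / (4 ^ m * (4 ^ m + 1)))
          ≤ 1 / (2 * 4 ^ m: ℝ) := min_le_left _ _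
      calc min (1 / (2 * 4 ^ m)) (δ * I⁻¹ / (4 ^ m * (4 ^ m + 1))) * (ρ * (u ^ (2 * m) + P))
          ≤ 1 / (2 * 4 ^ m) * (ρ * (u ^ (2 * m) + P)) := by
            apply mul_le_mul_of_nonneg_right hC
            positivity
        _ ≤ 1 / (2 * 4 ^ m) * (ρ * (2 * u ^ (2 * m))) := by
            apply mul_le_mul_of_nonneg_left _ (by positivity)
            apply mul_le_mul_of_nonneg_left _ hρ
            linarith
        _ = ρ * (u ^ (2 * m) / 4 ^ m) := by field_simp
        _ = ρ * I⁻¹ * ((|u| / 2) ^ (2 * m) * I) := by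
            rw [hmid]
            field_simp
        _ ≤ ρ * I⁻¹ * ∫ z in (-1 : ℝ)..1, F z := by
            apply mul_le_mul_of_nonneg_left key
            positivity
    · -- |u| ≤ 2X : integrate over a subinterval away from 0
      have hu2X : u ^ (2 * m) ≤ 4 ^ m * P := by
        rw [← habs, hPdef]
        calc |u| ^ (2 * m) ≤ (2 * X) ^ (2 * m) :=
              pow_le_pow_left₀ (abs_nonneg u) hcase _
          _ = 4 ^ m * X ^ (2 * m) := by rw [mul_pow, pow_mul]; norm_num
      -- a good subinterval depending on the sign of u
      obtain ⟨a, b, ha, hab, hb, hδab, hpt⟩ :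
          ∃ a b : ℝ, -1 ≤ a ∧ a ≤ b ∧ b ≤ 1 ∧ δ ≤ ∫ z in a..b, g z ∧
            ∀ z ∈ Set.Icc a b, (X / 2) ^ (2 * m) ≤ (u + z * X) ^ (2 * m) := by
        rcases le_total 0 u with hu | hu
        · refine ⟨1/2, 3/4, by norm_num, by norm_num, by norm_num,
            by rw [← hδ₁def]; exact min_le_left _ _, ?_⟩
          intro z hz
          have h1 : X / 2 ≤ u + z * X := by
            nlinarith [hz.1, hz.2]
          exact pow_le_pow_left₀ (by positivity) h1 _
        · refine ⟨-3/4, -1/2, by norm_num, by norm_num, by norm_num,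
            by rw [← hδ₂def]; exact min_le_right _ _, ?_⟩
          intro z hz
          have h1 : u + z * X ≤ -(X / 2) := by
            nlinarith [hz.1, hz.2]
          have h2 : X / 2 ≤ |u + z * X| := by
            rw [abs_of_nonpos (by linarith [hX])]
            linarith
          calc (X / 2) ^ (2 * m) ≤ |u + z * X| ^ (2 * m) :=
              pow_le_pow_left₀ (by positivity) h2 _
            _ = (u + z * X) ^ (2 * m) := by
              rw [← abs_pow, abs_of_nonneg (hev _)]
      have key : (X / 2) ^ (2 * m) * δ ≤ ∫ z in (-1 : ℝ)..1, F z := by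
        have step1 : (X / 2) ^ (2 * m) * δ ≤ ∫ z in a..b, F z := by
          have h2 : ∫ z in a..b, (X / 2) ^ (2 * m) * g z ≤ ∫ z in a..b, F z := by
            apply intervalIntegral.integral_mono_on hab
              ((hgint a b).const_mul _) (hFint a b)
            intro z hz
            have hzIcc : z ∈ Set.Icc (-1:ℝ) 1 := ⟨ha.trans hz.1, hz.2.trans hb⟩
            exact mul_le_mul_of_nonneg_right (hpt z hz) (hgnn z hzIcc)
          rw [intervalIntegral.integral_const_mul] at h2
          refine le_trans ?_ h2
          exact mul_le_mul_of_nonneg_left hδab (by positivity)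
        exact step1.trans (entropy_sub_integral_le hFcont hFnn ha hab hb)
      have hmid : (X / 2) ^ (2 * m) = P / 4 ^ m := by
        rw [hPdef, div_pow]
        norm_num [pow_mul]
      have hC : min (1 / (2 * 4 ^ m)) (δ * I⁻¹ / (4 ^ m * (4 ^ m + 1)))
          ≤ δ * I⁻¹ / (4 ^ m * (4 ^ m + 1) : ℝ) := min_le_right _ _
      calc min (1 / (2 * 4 ^ m)) (δ * I⁻¹ / (4 ^ m * (4 ^ m + 1))) * (ρ * (u ^ (2 * m) + P))
          ≤ δ * I⁻¹ / (4 ^ m * (4 ^ m + 1)) * (ρ * (u ^ (2 * m) + P)) := by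
            apply mul_le_mul_of_nonneg_right hC
            positivity
        _ ≤ δ * I⁻¹ / (4 ^ m * (4 ^ m + 1)) * (ρ * ((4 ^ m + 1) * P)) := by
            apply mul_le_mul_of_nonneg_left _ (by positivity)
            apply mul_le_mul_of_nonneg_left _ hρ
            linarith
        _ = ρ * I⁻¹ * ((X / 2) ^ (2 * m) * δ) := by
            rw [hmid]
            field_simp
        _ ≤ ρ * I⁻¹ * ∫ z in (-1 : ℝ)..1, F z := by
            apply mul_le_mul_of_nonneg_left key
            positivity
  · -- upper bound
    rw [hηeq, hPeq]
    have key : (∫ z in (-1 : ℝ)..1, F z) ≤ 2 ^ (2 * m) * (u ^ (2 * m) + P) * I := by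
      have h2 : ∫ z in (-1 : ℝ)..1, F z
          ≤ ∫ z in (-1 : ℝ)..1, 2 ^ (2 * m) * (u ^ (2 * m) + P) * g z := by
        apply intervalIntegral.integral_mono_on (by norm_num) (hFint _ _)
          ((hgint _ _).const_mul _)
        intro z hz
        have h1 : |u + z * X| ≤ |u| + X := by
          have hz1 : |z * X| ≤ X := by
            rw [abs_mul, abs_of_nonneg hX]
            exact mul_le_of_le_one_left hX (abs_le.mpr ⟨hz.1, hz.2⟩)
          calc |u + z * X| ≤ |u| + |z * X| := abs_add_le _ _
            _ ≤ |u| + X := by linarith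
        have h3 : (u + z * X) ^ (2 * m) ≤ 2 ^ (2 * m) * (u ^ (2 * m) + P) := by
          calc (u + z * X) ^ (2 * m) = |u + z * X| ^ (2 * m) := by
                rw [← abs_pow, abs_of_nonneg (hev _)]
            _ ≤ (|u| + X) ^ (2 * m) := pow_le_pow_left₀ (abs_nonneg _) h1 _
            _ ≤ 2 ^ (2 * m) * (|u| ^ (2 * m) + X ^ (2 * m)) :=
                entropy_pow_add_le _ _ (abs_nonneg u) hX _
            _ = 2 ^ (2 * m) * (u ^ (2 * m) + P) := by rw [habs, hPdef]
        exact mul_le_mul_of_nonneg_right h3 (hgnn z hz)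
      rw [intervalIntegral.integral_const_mul] at h2
      exact h2
    calc ρ * I⁻¹ * ∫ z in (-1 : ℝ)..1, F z
        ≤ ρ * I⁻¹ * (2 ^ (2 * m) * (u ^ (2 * m) + P) * I) := by
          apply mul_le_mul_of_nonneg_left key
          positivity
      _ = 2 ^ (2 * m) * (ρ * (u ^ (2 * m) + P)) := by
          field_simp
end

section
/- For m, n ∈ ℕ and the entropies η_m as defined, there is a constant C(m,n) such that η_m(ρ,u) · η_n(ρ,u) ≤ C(m,n) ρ η_{m+n}(ρ,u) for all ρ ≥ 0, u ∈ ℝ. -/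
open MeasureTheory intervalIntegral

lemma epow_nonneg (x : ℝ) (k : ℕ) : 0 ≤ x ^ (2 * k) := by
  rw [pow_mul]; positivity

lemma contW {lam : ℝ} (hlam : 0 ≤ lam) : Continuous fun z : ℝ => (1 - z ^ 2) ^ lam :=
  (Real.continuous_rpow_const hlam).comp (by continuity)

lemma wnonneg {lam : ℝ} (z : ℝ) (hz : z ^ 2 ≤ 1) : 0 ≤ (1 - z ^ 2) ^ lam :=
  Real.rpow_nonneg (by linarith) lam

lemma A_pos {lam : ℝ} (hlam : 0 ≤ lam) : 0 < ∫ z in (-1:ℝ)..1, (1 - z ^ 2) ^ lam := by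
  apply intervalIntegral.intervalIntegral_pos_of_pos_on
  · exact (contW hlam).intervalIntegrable _ _
  · intro x hx
    apply Real.rpow_pos_of_pos
    nlinarith [hx.1, hx.2]
  · norm_num

lemma M_pos {lam : ℝ} (hlam : 0 ≤ lam) (k : ℕ) :
    0 < ∫ z in (-1:ℝ)..1, z ^ (2 * k) * (1 - z ^ 2) ^ lam := by
  have hint : ∀ a b : ℝ, IntervalIntegrable
      (fun z => z ^ (2 * k) * (1 - z ^ 2) ^ lam) volume a b :=
    fun a b => ((continuous_pow _).mul (contW hlam)).intervalIntegrable a b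
  have hsplit := intervalIntegral.integral_add_adjacent_intervals
    (a := (-1:ℝ)) (b := (1/2:ℝ)) (c := (1:ℝ)) (hint _ _) (hint _ _)
  rw [← hsplit]
  have h1 : 0 ≤ ∫ z in (-1:ℝ)..(1/2:ℝ), z ^ (2 * k) * (1 - z ^ 2) ^ lam := by
    apply intervalIntegral.integral_nonneg (by norm_num)
    intro x hx
    exact mul_nonneg (epow_nonneg x k) (wnonneg x (by nlinarith [hx.1, hx.2]))
  have h2 : 0 < ∫ z in (1/2:ℝ)..(1:ℝ), z ^ (2 * k) * (1 - z ^ 2) ^ lam := by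
    apply intervalIntegral.intervalIntegral_pos_of_pos_on (hint _ _)
    · intro x hx
      have hx1 := hx.1; have hx2 := hx.2
      have hx0 : (0:ℝ) < x := by linarith
      exact mul_pos (pow_pos hx0 _) (Real.rpow_pos_of_pos (by nlinarith) lam)
    · norm_num
  linarith

lemma key_pointwise (k : ℕ) (u a : ℝ) :
    u ^ (2 * k) + a ^ (2 * k) ≤ 2 * ((u + a) ^ (2 * k) + (u - a) ^ (2 * k)) := by
  set B := max |u + a| |u - a| with hB
  have hB0 : 0 ≤ B := le_trans (abs_nonneg _) (le_max_left _ _)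
  have h2u : 2 * |u| ≤ |u + a| + |u - a| := by
    have h := abs_add_le (u + a) (u - a)
    rw [show u + a + (u - a) = 2 * u by ring, abs_mul] at h
    simpa using h
  have h2a : 2 * |a| ≤ |u + a| + |u - a| := by
    have h := abs_add_le (u + a) (-(u - a))
    rw [show u + a + -(u - a) = 2 * a by ring, abs_mul, abs_neg] at h
    simpa using h
  have hu : |u| ≤ B := by
    have := le_max_left |u + a| |u - a|
    have := le_max_right |u + a| |u - a|
    linarith
  have ha : |a| ≤ B := by
    have := le_max_left |u + a| |u - a|
    have := le_max_right |u + a| |u - a|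
    linarith
  have hBk : B ^ (2 * k) ≤ (u + a) ^ (2 * k) + (u - a) ^ (2 * k) := by
    rcases max_cases |u + a| |u - a| with ⟨h, _⟩ | ⟨h, _⟩
    · rw [hB, h, (even_two_mul k).pow_abs]
      exact le_add_of_nonneg_right (epow_nonneg _ k)
    · rw [hB, h, (even_two_mul k).pow_abs]
      exact le_add_of_nonneg_left (epow_nonneg _ k)
  have hu' : u ^ (2 * k) ≤ B ^ (2 * k) := by
    rw [← (even_two_mul k).pow_abs u]
    exact pow_le_pow_left₀ (abs_nonneg u) hu _
  have ha' : a ^ (2 * k) ≤ B ^ (2 * k) := by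
    rw [← (even_two_mul k).pow_abs a]
    exact pow_le_pow_left₀ (abs_nonneg a) ha _
  linarith

lemma cross_le (x y : ℝ) (m n : ℕ) :
    x ^ (2 * m) * y ^ (2 * n) ≤ x ^ (2 * (m + n)) + y ^ (2 * (m + n)) := by
  have hx2 : (0:ℝ) ≤ x ^ 2 := sq_nonneg x
  have hy2 : (0:ℝ) ≤ y ^ 2 := sq_nonneg y
  rw [pow_mul, pow_mul, pow_mul, pow_mul]
  rcases le_total (x ^ 2) (y ^ 2) with h | h
  · calc (x ^ 2) ^ m * (y ^ 2) ^ n ≤ (y ^ 2) ^ m * (y ^ 2) ^ n := by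
          apply mul_le_mul_of_nonneg_right (pow_le_pow_left₀ hx2 h m) (by positivity)
      _ = (y ^ 2) ^ (m + n) := by rw [← pow_add]
      _ ≤ (x ^ 2) ^ (m + n) + (y ^ 2) ^ (m + n) := le_add_of_nonneg_left (by positivity)
  · calc (x ^ 2) ^ m * (y ^ 2) ^ n ≤ (x ^ 2) ^ m * (x ^ 2) ^ n := by
          apply mul_le_mul_of_nonneg_left (pow_le_pow_left₀ hy2 h n) (by positivity)
      _ = (x ^ 2) ^ (m + n) := by rw [← pow_add]
      _ ≤ (x ^ 2) ^ (m + n) + (y ^ 2) ^ (m + n) := le_add_of_nonneg_right (by positivity)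

lemma point_up (k : ℕ) (u s z : ℝ) (hs : 0 ≤ s) (hz : |z| ≤ 1) :
    (u + z * s) ^ (2 * k) ≤ 2 ^ (2 * k) * (u ^ (2 * k) + s ^ (2 * k)) := by
  have h1 : |u + z * s| ≤ |u| + s := by
    calc |u + z * s| ≤ |u| + |z * s| := abs_add_le _ _
      _ ≤ |u| + s := by
          rw [abs_mul, abs_of_nonneg hs]
          nlinarith [abs_nonneg z]
  have h2 : |u| + s ≤ 2 * max |u| s := by
    have := le_max_left |u| s; have := le_max_right |u| s; linarith
  calc (u + z * s) ^ (2 * k) = |u + z * s| ^ (2 * k) := ((even_two_mul k).pow_abs _).symm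
    _ ≤ (2 * max |u| s) ^ (2 * k) := pow_le_pow_left₀ (abs_nonneg _) (h1.trans h2) _
    _ = 2 ^ (2 * k) * (max |u| s) ^ (2 * k) := mul_pow _ _ _
    _ ≤ 2 ^ (2 * k) * (u ^ (2 * k) + s ^ (2 * k)) := by
        apply mul_le_mul_of_nonneg_left _ (by positivity)
        rcases max_cases |u| s with ⟨h, _⟩ | ⟨h, _⟩
        · rw [h, (even_two_mul k).pow_abs]
          exact le_add_of_nonneg_right (epow_nonneg s k)
        · rw [h]; exact le_add_of_nonneg_left (epow_nonneg u k)

lemma upper (lam : ℝ) (hlam : 0 ≤ lam) (k : ℕ) (u s : ℝ) (hs : 0 ≤ s) :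
    (∫ z in (-1:ℝ)..1, (u + z * s) ^ (2 * k) * (1 - z ^ 2) ^ lam) ≤
      2 ^ (2 * k) * (u ^ (2 * k) + s ^ (2 * k)) * ∫ z in (-1:ℝ)..1, (1 - z ^ 2) ^ lam := by
  rw [← intervalIntegral.integral_const_mul]
  apply intervalIntegral.integral_mono_on (by norm_num)
  · exact ((by continuity : Continuous fun z : ℝ => (u + z * s) ^ (2 * k)).mul
      (contW hlam)).intervalIntegrable _ _
  · exact (continuous_const.mul (contW hlam)).intervalIntegrable _ _
  · intro x hx
    have hw : 0 ≤ (1 - x ^ 2) ^ lam := wnonneg x (by nlinarith [hx.1, hx.2])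
    have := point_up k u s x hs (abs_le.mpr ⟨hx.1, hx.2⟩)
    exact mul_le_mul_of_nonneg_right this hw

lemma lower (lam : ℝ) (hlam : 0 ≤ lam) (k : ℕ) (u s : ℝ) :
    (1/4) * (u ^ (2 * k) * (∫ z in (-1:ℝ)..1, (1 - z ^ 2) ^ lam)
        + s ^ (2 * k) * ∫ z in (-1:ℝ)..1, z ^ (2 * k) * (1 - z ^ 2) ^ lam) ≤
      ∫ z in (-1:ℝ)..1, (u + z * s) ^ (2 * k) * (1 - z ^ 2) ^ lam := by
  have hcF : Continuous fun z : ℝ => (u + z * s) ^ (2 * k) * (1 - z ^ 2) ^ lam :=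
    (by continuity : Continuous fun z : ℝ => (u + z * s) ^ (2 * k)).mul (contW hlam)
  have hcG : Continuous fun z : ℝ => (u - z * s) ^ (2 * k) * (1 - z ^ 2) ^ lam :=
    (by continuity : Continuous fun z : ℝ => (u - z * s) ^ (2 * k)).mul (contW hlam)
  have heq : (∫ z in (-1:ℝ)..1, (u - z * s) ^ (2 * k) * (1 - z ^ 2) ^ lam)
      = ∫ z in (-1:ℝ)..1, (u + z * s) ^ (2 * k) * (1 - z ^ 2) ^ lam := by
    have h := intervalIntegral.integral_comp_neg (a := (-1:ℝ)) (b := 1)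
      (f := fun z => (u + z * s) ^ (2 * k) * (1 - z ^ 2) ^ lam)
    simp only [neg_neg, neg_one_mul, neg_mul, neg_sq] at h ⊢
    rw [← h]
    congr 1
  have hmono : (∫ z in (-1:ℝ)..1,
        (1/2) * ((u ^ (2 * k) + z ^ (2 * k) * s ^ (2 * k)) * (1 - z ^ 2) ^ lam)) ≤
      ∫ z in (-1:ℝ)..1, ((u + z * s) ^ (2 * k) * (1 - z ^ 2) ^ lam
        + (u - z * s) ^ (2 * k) * (1 - z ^ 2) ^ lam) := by
    apply intervalIntegral.integral_mono_on (by norm_num)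
    · exact (continuous_const.mul (((continuous_const.add ((continuous_pow _).mul
        continuous_const)).mul (contW hlam)))).intervalIntegrable _ _
    · exact (hcF.add hcG).intervalIntegrable _ _
    · intro x hx
      have hw : 0 ≤ (1 - x ^ 2) ^ lam := wnonneg x (by nlinarith [hx.1, hx.2])
      have hkey := key_pointwise k u (x * s)
      have hxs : (x * s) ^ (2 * k) = x ^ (2 * k) * s ^ (2 * k) := mul_pow _ _ _
      nlinarith [mul_le_mul_of_nonneg_right hkey hw]
  have hsum : (∫ z in (-1:ℝ)..1, ((u + z * s) ^ (2 * k) * (1 - z ^ 2) ^ lam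
        + (u - z * s) ^ (2 * k) * (1 - z ^ 2) ^ lam))
      = (∫ z in (-1:ℝ)..1, (u + z * s) ^ (2 * k) * (1 - z ^ 2) ^ lam)
        + ∫ z in (-1:ℝ)..1, (u - z * s) ^ (2 * k) * (1 - z ^ 2) ^ lam :=
    intervalIntegral.integral_add (hcF.intervalIntegrable _ _) (hcG.intervalIntegrable _ _)
  have hlin : (∫ z in (-1:ℝ)..1,
        (1/2) * ((u ^ (2 * k) + z ^ (2 * k) * s ^ (2 * k)) * (1 - z ^ 2) ^ lam))
      = (1/2) * (u ^ (2 * k) * (∫ z in (-1:ℝ)..1, (1 - z ^ 2) ^ lam)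
        + s ^ (2 * k) * ∫ z in (-1:ℝ)..1, z ^ (2 * k) * (1 - z ^ 2) ^ lam) := by
    have hrw : (fun z : ℝ => (1/2) * ((u ^ (2 * k) + z ^ (2 * k) * s ^ (2 * k)) * (1 - z ^ 2) ^ lam))
        = fun z : ℝ => (1/2 * u ^ (2 * k)) * (1 - z ^ 2) ^ lam
          + (1/2 * s ^ (2 * k)) * (z ^ (2 * k) * (1 - z ^ 2) ^ lam) := by
      ext z; ring
    rw [hrw, intervalIntegral.integral_add
        (f := fun z : ℝ => (1/2 * u ^ (2 * k)) * (1 - z ^ 2) ^ lam)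
        (g := fun z : ℝ => (1/2 * s ^ (2 * k)) * (z ^ (2 * k) * (1 - z ^ 2) ^ lam))
        ((continuous_const.mul (contW hlam)).intervalIntegrable _ _)
        ((continuous_const.mul ((continuous_pow _).mul (contW hlam))).intervalIntegrable _ _),
      intervalIntegral.integral_const_mul, intervalIntegral.integral_const_mul]
    ring
  rw [hlin] at hmono
  rw [hsum, heq] at hmono
  linarith

set_option maxHeartbeats 1000000 in
/-- Product estimate `η_m(U) · η_n(U) ≤ C(m,n) ρ η_{m+n}(U)`. -/
theorem stmt1 (θ lam : ℝ) (hθ : 0 < θ) (hlam : 0 < lam) (m n : ℕ) :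
    ∃ C : ℝ, 0 < C ∧ ∀ ρ u : ℝ, 0 ≤ ρ →
      entropyEta θ lam m ρ u * entropyEta θ lam n ρ u ≤
        C * (ρ * entropyEta θ lam (m + n) ρ u) := by
  have hlam' : (0:ℝ) ≤ lam := hlam.le
  obtain ⟨A, hA⟩ : ∃ a : ℝ, a = ∫ z in (-1:ℝ)..1, (1 - z ^ 2) ^ lam := ⟨_, rfl⟩
  obtain ⟨Mv, hMv⟩ : ∃ a : ℝ, a = ∫ z in (-1:ℝ)..1, z ^ (2 * (m + n)) * (1 - z ^ 2) ^ lam :=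
    ⟨_, rfl⟩
  have hApos : 0 < A := hA ▸ A_pos hlam'
  have hMpos : 0 < Mv := hMv ▸ M_pos hlam' _
  obtain ⟨μ, hμ⟩ : ∃ a : ℝ, a = min 1 (Mv / A) := ⟨_, rfl⟩
  have hμpos : 0 < μ := hμ ▸ lt_min one_pos (div_pos hMpos hApos)
  refine ⟨4 * 2 ^ (2 * m) * 2 ^ (2 * n) * 4 / μ, by positivity, fun ρ u hρ => ?_⟩
  obtain ⟨s, hs⟩ : ∃ a : ℝ, a = ρ ^ θ := ⟨_, rfl⟩
  have hs0 : 0 ≤ s := hs ▸ Real.rpow_nonneg hρ θ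
  obtain ⟨Im, hIm⟩ : ∃ a : ℝ, a = ∫ z in (-1:ℝ)..1, (u + z * s) ^ (2 * m) * (1 - z ^ 2) ^ lam :=
    ⟨_, rfl⟩
  obtain ⟨In, hIn⟩ : ∃ a : ℝ, a = ∫ z in (-1:ℝ)..1, (u + z * s) ^ (2 * n) * (1 - z ^ 2) ^ lam :=
    ⟨_, rfl⟩
  obtain ⟨IK, hIK⟩ : ∃ a : ℝ,
      a = ∫ z in (-1:ℝ)..1, (u + z * s) ^ (2 * (m + n)) * (1 - z ^ 2) ^ lam := ⟨_, rfl⟩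
  have intnn : ∀ k : ℕ, 0 ≤ ∫ z in (-1:ℝ)..1, (u + z * s) ^ (2 * k) * (1 - z ^ 2) ^ lam := by
    intro k
    apply intervalIntegral.integral_nonneg (by norm_num)
    intro x hx
    exact mul_nonneg (epow_nonneg _ k) (wnonneg x (by nlinarith [hx.1, hx.2]))
  have hIm0 : 0 ≤ Im := hIm ▸ intnn m
  have hIn0 : 0 ≤ In := hIn ▸ intnn n
  have hem : entropyEta θ lam m ρ u = ρ * A⁻¹ * Im := by
    simp only [entropyEta, ← hs, ← hA, ← hIm]
  have hen : entropyEta θ lam n ρ u = ρ * A⁻¹ * In := by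
    simp only [entropyEta, ← hs, ← hA, ← hIn]
  have heK : entropyEta θ lam (m + n) ρ u = ρ * A⁻¹ * IK := by
    simp only [entropyEta, ← hs, ← hA, ← hIK]
  have hupm : Im ≤ 2 ^ (2 * m) * (u ^ (2 * m) + s ^ (2 * m)) * A := by
    rw [hIm, hA]; exact upper lam hlam' m u s hs0
  have hupn : In ≤ 2 ^ (2 * n) * (u ^ (2 * n) + s ^ (2 * n)) * A := by
    rw [hIn, hA]; exact upper lam hlam' n u s hs0
  have hlow : (1/4) * (u ^ (2 * (m + n)) * A + s ^ (2 * (m + n)) * Mv) ≤ IK := by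
    rw [hIK, hA, hMv]; exact lower lam hlam' (m + n) u s
  obtain ⟨T, hT⟩ : ∃ a : ℝ, a = u ^ (2 * (m + n)) + s ^ (2 * (m + n)) := ⟨_, rfl⟩
  have hT0 : 0 ≤ T := hT ▸ add_nonneg (epow_nonneg _ _) (epow_nonneg _ _)
  have hTmTn : (u ^ (2 * m) + s ^ (2 * m)) * (u ^ (2 * n) + s ^ (2 * n)) ≤ 4 * T := by
    have c1 := cross_le u s m n
    have c2 := cross_le s u m n
    have c0 : u ^ (2 * m) * u ^ (2 * n) = u ^ (2 * (m + n)) := by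
      rw [← pow_add]; congr 1; ring
    have c3 : s ^ (2 * m) * s ^ (2 * n) = s ^ (2 * (m + n)) := by
      rw [← pow_add]; congr 1; ring
    have h1 : 0 ≤ u ^ (2 * (m + n)) := epow_nonneg _ _
    have h2 : 0 ≤ s ^ (2 * (m + n)) := epow_nonneg _ _
    rw [hT]
    nlinarith [c1, c2, c0, c3]
  -- upper bound for the product
  have hprod : entropyEta θ lam m ρ u * entropyEta θ lam n ρ u ≤
      ρ ^ 2 * (2 ^ (2 * m) * 2 ^ (2 * n)) * (4 * T) := by
    rw [hem, hen]
    have hb1 : ρ * A⁻¹ * Im ≤ ρ * A⁻¹ * (2 ^ (2 * m) * (u ^ (2 * m) + s ^ (2 * m)) * A) :=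
      mul_le_mul_of_nonneg_left hupm (by positivity)
    have hb2 : ρ * A⁻¹ * In ≤ ρ * A⁻¹ * (2 ^ (2 * n) * (u ^ (2 * n) + s ^ (2 * n)) * A) :=
      mul_le_mul_of_nonneg_left hupn (by positivity)
    have hTm0 : 0 ≤ u ^ (2 * m) + s ^ (2 * m) :=
      add_nonneg (epow_nonneg _ _) (epow_nonneg _ _)
    calc ρ * A⁻¹ * Im * (ρ * A⁻¹ * In)
        ≤ (ρ * A⁻¹ * (2 ^ (2 * m) * (u ^ (2 * m) + s ^ (2 * m)) * A)) *
          (ρ * A⁻¹ * (2 ^ (2 * n) * (u ^ (2 * n) + s ^ (2 * n)) * A)) := by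
          apply mul_le_mul hb1 hb2 (by positivity) (by positivity)
      _ = ρ ^ 2 * (2 ^ (2 * m) * 2 ^ (2 * n)) *
          ((u ^ (2 * m) + s ^ (2 * m)) * (u ^ (2 * n) + s ^ (2 * n))) := by
          field_simp
      _ ≤ ρ ^ 2 * (2 ^ (2 * m) * 2 ^ (2 * n)) * (4 * T) := by
          apply mul_le_mul_of_nonneg_left hTmTn (by positivity)
  -- lower bound for the right-hand side
  have hμ1 : μ ≤ 1 := hμ ▸ min_le_left _ _
  have hμ2 : μ ≤ Mv / A := hμ ▸ min_le_right _ _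
  have hmid : (1/4) * (μ * T) ≤ A⁻¹ * IK := by
    have hAA : A * A⁻¹ = 1 := mul_inv_cancel₀ hApos.ne'
    have h1 : A⁻¹ * ((1/4) * (u ^ (2 * (m + n)) * A + s ^ (2 * (m + n)) * Mv))
        = (1/4) * (u ^ (2 * (m + n)) + s ^ (2 * (m + n)) * (Mv / A)) := by
      rw [div_eq_mul_inv]
      linear_combination (1/4 * u ^ (2 * (m + n))) * hAA
    have h2 : (1/4) * (μ * T) ≤
        (1/4) * (u ^ (2 * (m + n)) + s ^ (2 * (m + n)) * (Mv / A)) := by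
      have hu0 : 0 ≤ u ^ (2 * (m + n)) := epow_nonneg _ _
      have hs0' : 0 ≤ s ^ (2 * (m + n)) := epow_nonneg _ _
      rw [hT]
      linarith [mul_le_mul_of_nonneg_right hμ1 hu0, mul_le_mul_of_nonneg_right hμ2 hs0']
    calc (1/4) * (μ * T) ≤ (1/4) * (u ^ (2 * (m + n)) + s ^ (2 * (m + n)) * (Mv / A)) := h2
      _ = A⁻¹ * ((1/4) * (u ^ (2 * (m + n)) * A + s ^ (2 * (m + n)) * Mv)) := h1.symm
      _ ≤ A⁻¹ * IK := mul_le_mul_of_nonneg_left hlow (by positivity)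
  have hfinal : ρ ^ 2 * (2 ^ (2 * m) * 2 ^ (2 * n)) * (4 * T) ≤
      4 * 2 ^ (2 * m) * 2 ^ (2 * n) * 4 / μ * (ρ * (ρ * A⁻¹ * IK)) := by
    have hC0 : (0:ℝ) ≤ 4 * 2 ^ (2 * m) * 2 ^ (2 * n) * 4 / μ * ρ ^ 2 := by positivity
    calc ρ ^ 2 * (2 ^ (2 * m) * 2 ^ (2 * n)) * (4 * T)
        = 4 * 2 ^ (2 * m) * 2 ^ (2 * n) * 4 / μ * ρ ^ 2 * ((1/4) * (μ * T)) := by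
          field_simp
      _ ≤ 4 * 2 ^ (2 * m) * 2 ^ (2 * n) * 4 / μ * ρ ^ 2 * (A⁻¹ * IK) :=
          mul_le_mul_of_nonneg_left hmid hC0
      _ = 4 * 2 ^ (2 * m) * 2 ^ (2 * n) * 4 / μ * (ρ * (ρ * A⁻¹ * IK)) := by ring
  rw [heK]
  exact le_trans hprod hfinal
end

section
/- Let m ∈ ℕ, θ > 0, and p a real number with p ≥ m + 1/(2θ). Then there is a constant C(m,p,θ) such that ρ² (u^{2m} + ρ^{2mθ}) ≤ C(m,p,θ) [ρ(u^{2m} + ρ^{2mθ}) + ρ(u^{2p} + ρ^{2pθ})] for all ρ ≥ 0, u ∈ ℝ. -/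
/-- `ρ² (u^{2m} + ρ^{2mθ}) ≤ C [ρ(u^{2m} + ρ^{2mθ}) + ρ(u^{2p} + ρ^{2pθ})]`
for `p ≥ m + 1/(2θ)`. -/
theorem stmt2 (θ : ℝ) (hθ : 0 < θ) (m : ℕ) (p : ℝ) (hp : (m : ℝ) + 1 / (2 * θ) ≤ p) :
    ∃ C : ℝ, 0 < C ∧ ∀ ρ u : ℝ, 0 ≤ ρ →
      ρ ^ 2 * (u ^ (2 * m) + ρ ^ (2 * (m : ℝ) * θ)) ≤
        C * (ρ * (u ^ (2 * m) + ρ ^ (2 * (m : ℝ) * θ)) +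
             ρ * (|u| ^ (2 * p) + ρ ^ (2 * p * θ))) := by
  have hθ2 : (0:ℝ) < 2 * θ := by linarith
  have hmp : (m : ℝ) < p := by
    have h : (0:ℝ) < 1 / (2 * θ) := by positivity
    linarith
  have hp0 : (0:ℝ) < p := lt_of_le_of_lt (by positivity) hmp
  have hpm0 : (0:ℝ) < p - m := by linarith
  have hpm : 1 / (2 * θ) ≤ p - (m:ℝ) := by linarith
  have hkey : (1:ℝ) ≤ 2 * θ * (p - m) := by
    rw [div_le_iff₀ hθ2] at hpm
    nlinarith [hpm]
  refine ⟨2, by norm_num, ?_⟩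
  intro ρ u hρ
  have hAm : (0:ℝ) ≤ u ^ (2*m) := by rw [pow_mul]; positivity
  have hAr : (0:ℝ) ≤ ρ ^ (2*(m:ℝ)*θ) := Real.rpow_nonneg hρ _
  have hBu : (0:ℝ) ≤ |u| ^ (2*p) := Real.rpow_nonneg (abs_nonneg u) _
  have hBr : (0:ℝ) ≤ ρ ^ (2*p*θ) := Real.rpow_nonneg hρ _
  rcases le_or_gt ρ 1 with h1 | h1
  · nlinarith [mul_le_mul_of_nonneg_right (mul_le_mul_of_nonneg_left h1 hρ)
      (add_nonneg hAm hAr), mul_nonneg hρ (add_nonneg hBu hBr),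
      mul_nonneg hρ (add_nonneg hAm hAr)]
  · have hρ1 : (1:ℝ) ≤ ρ := h1.le
    have hρ0 : (0:ℝ) < ρ := lt_of_lt_of_le one_pos hρ1
    have hu2m : u ^ (2*m) = |u| ^ ((2*m : ℕ):ℝ) := by
      rw [Real.rpow_natCast, pow_abs, abs_of_nonneg hAm]
    have key2 : ρ * ρ ^ (2*(m:ℝ)*θ) ≤ ρ ^ (2*p*θ) := by
      have heq : ρ * ρ ^ (2*(m:ℝ)*θ) = ρ ^ (1 + 2*(m:ℝ)*θ) := by
        rw [Real.rpow_add hρ0, Real.rpow_one]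
      rw [heq]
      apply Real.rpow_le_rpow_of_exponent_le hρ1
      nlinarith [hkey]
    have key1 : ρ * u ^ (2*m) ≤ |u| ^ (2*p) + ρ ^ (2*p*θ) := by
      rcases le_or_gt ρ (|u| ^ (2*(p - m))) with hcase | hcase
      · -- then ρ * u^{2m} ≤ |u|^{2p}
        by_cases hu0 : u = 0
        · exfalso
          rw [hu0, abs_zero, Real.zero_rpow (by positivity)] at hcase
          linarith
        · have hu0' : 0 < |u| := abs_pos.mpr hu0
          have : ρ * u ^ (2*m) ≤ |u| ^ (2*(p-m)) * |u| ^ ((2*m : ℕ):ℝ) := by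
            rw [← hu2m]
            exact mul_le_mul_of_nonneg_right hcase hAm
          calc ρ * u ^ (2*m) ≤ |u| ^ (2*(p-m)) * |u| ^ ((2*m : ℕ):ℝ) := this
            _ = |u| ^ (2*(p-m) + (2*m : ℕ)) := (Real.rpow_add hu0' _ _).symm
            _ = |u| ^ (2*p) := by push_cast; ring_nf
            _ ≤ |u| ^ (2*p) + ρ ^ (2*p*θ) := le_add_of_nonneg_right hBr
      · -- then u^{2m} ≤ ρ^{m/(p-m)} and ρ * u^{2m} ≤ ρ^{p/(p-m)} ≤ ρ^{2pθ}
        have h2 : u ^ (2*m) = (|u| ^ (2*(p-m))) ^ ((m:ℝ)/(p - m)) := by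
          rw [← Real.rpow_mul (abs_nonneg u)]
          have he : 2*(p-m) * ((m:ℝ)/(p-m)) = ((2*m : ℕ):ℝ) := by
            field_simp
            push_cast
            ring
          rw [he, ← hu2m]
        have hpow := Real.rpow_le_rpow (Real.rpow_nonneg (abs_nonneg u) _) hcase.le
          (by positivity : (0:ℝ) ≤ (m:ℝ)/(p-m))
        rw [← h2] at hpow
        have h3 : ρ * u ^ (2*m) ≤ ρ ^ (1 + (m:ℝ)/(p-m)) := by
          rw [Real.rpow_add hρ0, Real.rpow_one]
          exact mul_le_mul_of_nonneg_left hpow hρ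
        have h4 : ρ ^ (1 + (m:ℝ)/(p-m)) ≤ ρ ^ (2*p*θ) := by
          apply Real.rpow_le_rpow_of_exponent_le hρ1
          rw [show (1:ℝ) + (m:ℝ)/(p-m) = p/(p-m) by field_simp; ring, div_le_iff₀ hpm0]
          nlinarith [mul_le_mul_of_nonneg_left hkey hp0.le]
        linarith [h3, h4, hBu]
    nlinarith [mul_le_mul_of_nonneg_left key1 hρ, mul_le_mul_of_nonneg_left key2 hρ,
      mul_nonneg hρ (add_nonneg hAm hAr), mul_nonneg hρ hBu]
end

section
/- Let m ∈ ℕ, s > 1, θ > 0, and p ≥ ms + (s-1)/(2θ). Then there is a constant C such that (ρ^s |u|^{2ms} + ρ^{s + 2mθ s}) ≤ C [ρ(1 + u^{2p} + ρ^{2pθ})] for all ρ ≥ 0, u ∈ ℝ. In particular |η_m(ρ,u)|^s ≤ C(η_0(ρ,u) + η_p(ρ,u)) where η_0(ρ,u) = ρ. -/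
private lemma rpow_le_one_add {ρ a b : ℝ} (hρ : 0 ≤ ρ) (ha : 0 ≤ a) (hab : a ≤ b) :
    ρ ^ a ≤ 1 + ρ ^ b := by
  rcases le_or_gt ρ 1 with h | h
  · have : ρ ^ a ≤ 1 := Real.rpow_le_one hρ h ha
    have : (0:ℝ) ≤ ρ ^ b := Real.rpow_nonneg hρ b
    linarith [Real.rpow_le_one hρ h ha]
  · have : ρ ^ a ≤ ρ ^ b := Real.rpow_le_rpow_of_exponent_le h.le hab
    linarith

/-- `ρ^s |u|^{2ms} + ρ^{s + 2mθs} ≤ C ρ(1 + |u|^{2p} + ρ^{2pθ})` for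
`p ≥ ms + (s-1)/(2θ)`, `s > 1`.  In particular `|η_m|^s ≤ C(η_0 + η_p)`. -/
theorem stmt3 (θ s p : ℝ) (m : ℕ) (hθ : 0 < θ) (hs : 1 < s)
    (hp : (m : ℝ) * s + (s - 1) / (2 * θ) ≤ p) :
    ∃ C : ℝ, 0 < C ∧ ∀ ρ u : ℝ, 0 ≤ ρ →
      ρ ^ s * |u| ^ (2 * (m : ℝ) * s) + ρ ^ (s + 2 * (m : ℝ) * θ * s) ≤
        C * (ρ * (1 + |u| ^ (2 * p) + ρ ^ (2 * p * θ))) := by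
  have h2θ : (0:ℝ) < 2 * θ := by linarith
  have hdiv : 0 < (s - 1) / (2 * θ) := div_pos (by linarith) h2θ
  have hms : (0:ℝ) ≤ (m : ℝ) * s := mul_nonneg (Nat.cast_nonneg m) (by linarith)
  have hpms : (m : ℝ) * s + (s - 1) / (2 * θ) ≤ p := hp
  have hppos : 0 < p := by nlinarith
  -- key exponent inequality: s - 1 ≤ 2θ(p - m s)
  have hkey : s - 1 ≤ 2 * θ * (p - (m : ℝ) * s) := by
    have : (s - 1) / (2 * θ) ≤ p - (m : ℝ) * s := by linarith
    calc s - 1 = 2 * θ * ((s - 1) / (2 * θ)) := by field_simp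
    _ ≤ 2 * θ * (p - (m : ℝ) * s) := by
        exact mul_le_mul_of_nonneg_left this (le_of_lt h2θ)
  refine ⟨2, by norm_num, fun ρ u hρ => by
    rcases eq_or_lt_of_le hρ with h0 | hρpos
    · rw [← h0]
      rw [Real.zero_rpow (by linarith : s ≠ 0),
          Real.zero_rpow (by nlinarith : s + 2 * (m : ℝ) * θ * s ≠ 0)]
      have h1 : (0:ℝ) ≤ |u| ^ (2 * p) := Real.rpow_nonneg (abs_nonneg u) _
      have h2 : (0:ℝ) ≤ (0:ℝ) ^ (2 * p * θ) := Real.rpow_nonneg le_rfl _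
      nlinarith
    · -- main case ρ > 0
      have hu : (0:ℝ) ≤ |u| := abs_nonneg u
      -- first term bound: ρ^{s-1} |u|^{2ms} ≤ 1 + ρ^{2pθ} + |u|^{2p}
      have hfirst : ρ ^ (s - 1) * |u| ^ (2 * (m : ℝ) * s) ≤
          1 + ρ ^ (2 * p * θ) + |u| ^ (2 * p) := by
        rcases Nat.eq_zero_or_pos m with hm | hm
        · subst hm
          simp only [Nat.cast_zero, mul_zero, zero_mul, Real.rpow_zero, mul_one]
          have : ρ ^ (s - 1) ≤ 1 + ρ ^ (2 * p * θ) := by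
            apply rpow_le_one_add hρ (by linarith)
            nlinarith
          have hup : (0:ℝ) ≤ |u| ^ (2 * p) := Real.rpow_nonneg hu _
          linarith
        · have hmspos : (0:ℝ) < (m : ℝ) * s := by
            have : (1:ℝ) ≤ (m : ℝ) := by exact_mod_cast hm
            nlinarith
          have hpms' : (0:ℝ) < p - (m : ℝ) * s := by nlinarith
          set q : ℝ := p / (p - (m : ℝ) * s) with hq
          set q' : ℝ := p / ((m : ℝ) * s) with hq'
          have hconj : q.HolderConjugate q' := by
            rw [Real.holderConjugate_iff]; constructor
            · rw [hq]; rw [lt_div_iff₀ hpms']; nlinarith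
            · rw [hq, hq']; field_simp; ring
          have hy := Real.young_inequality_of_nonneg
            (Real.rpow_nonneg hρ (s - 1)) (Real.rpow_nonneg hu (2 * (m : ℝ) * s)) hconj
          have hx1 : (ρ ^ (s - 1)) ^ q = ρ ^ ((s - 1) * q) :=
            (Real.rpow_mul hρ _ _).symm
          have hx2 : (|u| ^ (2 * (m : ℝ) * s)) ^ q' = |u| ^ (2 * p) := by
            rw [← Real.rpow_mul hu]
            congr 1
            rw [hq']; field_simp
          rw [hx1, hx2] at hy
          have hbound1 : ρ ^ ((s - 1) * q) ≤ 1 + ρ ^ (2 * p * θ) := by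
            apply rpow_le_one_add hρ
            · exact mul_nonneg (by linarith) (le_of_lt hconj.pos)
            · rw [hq, ← mul_div_assoc, div_le_iff₀ hpms']
              nlinarith
          have hq1 : 1 ≤ q := le_of_lt hconj.lt
          have hq'1 : 1 ≤ q' := le_of_lt hconj.symm.lt
          have hA : (0:ℝ) ≤ ρ ^ ((s - 1) * q) := Real.rpow_nonneg hρ _
          have hB : (0:ℝ) ≤ |u| ^ (2 * p) := Real.rpow_nonneg hu _
          have h1 : ρ ^ ((s - 1) * q) / q ≤ ρ ^ ((s - 1) * q) := by
            apply div_le_self hA hq1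
          have h2 : |u| ^ (2 * p) / q' ≤ |u| ^ (2 * p) := div_le_self hB hq'1
          linarith
      -- second term bound
      have hsecond : ρ ^ (s - 1 + 2 * (m : ℝ) * θ * s) ≤ 1 + ρ ^ (2 * p * θ) := by
        apply rpow_le_one_add hρ
        · nlinarith
        · nlinarith
      -- assemble
      have e1 : ρ ^ s = ρ * ρ ^ (s - 1) := by
        rw [show s = 1 + (s - 1) by ring, Real.rpow_add hρpos, Real.rpow_one]
        ring_nf
      have e2 : ρ ^ (s + 2 * (m : ℝ) * θ * s) = ρ * ρ ^ (s - 1 + 2 * (m : ℝ) * θ * s) := by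
        rw [show s + 2 * (m : ℝ) * θ * s = 1 + (s - 1 + 2 * (m : ℝ) * θ * s) by ring,
          Real.rpow_add hρpos, Real.rpow_one]
      rw [e1, e2]
      have hup : (0:ℝ) ≤ |u| ^ (2 * p) := Real.rpow_nonneg hu _
      have hρp : (0:ℝ) ≤ ρ ^ (2 * p * θ) := Real.rpow_nonneg hρ _
      have hmul1 : ρ * (ρ ^ (s - 1) * |u| ^ (2 * (m : ℝ) * s)) ≤
          ρ * (1 + ρ ^ (2 * p * θ) + |u| ^ (2 * p)) :=
        mul_le_mul_of_nonneg_left hfirst hρ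
      have hmul2 : ρ * ρ ^ (s - 1 + 2 * (m : ℝ) * θ * s) ≤ ρ * (1 + ρ ^ (2 * p * θ)) :=
        mul_le_mul_of_nonneg_left hsecond hρ
      nlinarith [mul_nonneg hρ hup]⟩
end

section
/- Let r ≥ 1, Q compact with probability measure λ, E ⊂ ℝ^m closed. Let ν be a random Young measure on a probability space (Ω,P) and ν̃ a random Young measure on (Ω̃,P̃) having the same law as ν. If ν is an L^r-random Dirac mass (i.e. there is u ∈ L^r(Ω×Q;E) with ν = δ_{u(z)} ⊗ λ almost surely), then ν̃ is also an L^r-random Dirac mass. -/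
open MeasureTheory ProbabilityTheory
open scoped ENNReal

lemma pm_coe_meas {X : Type*} [MeasurableSpace X]
    [PseudoEMetricSpace X] [BorelSpace X] [HasOuterApproxClosed X]
    [MeasurableSpace (ProbabilityMeasure X)] [BorelSpace (ProbabilityMeasure X)] :
    Measurable (fun μ : ProbabilityMeasure X => (μ : Measure X)) := by
  apply Measure.measurable_of_measurable_coe
  intro s hs
  refine MeasurableSet.induction_on_open
    (C := fun s _ => Measurable fun μ : ProbabilityMeasure X => (μ : Measure X) s) ?_ ?_ ?_ s hs
  · intro U hU
    have lsc : LowerSemicontinuous (fun μ : ProbabilityMeasure X => (μ : Measure X) U) := by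
      rw [lowerSemicontinuous_iff_le_liminf]
      exact fun μ => ProbabilityMeasure.le_liminf_measure_open_of_tendsto Filter.tendsto_id hU
    exact lsc.measurable
  · intro t ht hC
    have heq : (fun μ : ProbabilityMeasure X => (μ : Measure X) tᶜ)
        = fun μ : ProbabilityMeasure X => 1 - (μ : Measure X) t := by
      funext μ
      rw [measure_compl ht (measure_ne_top _ _), measure_univ]
    rw [heq]
    exact Measurable.const_sub hC 1
  · intro f hdisj hfm hC
    have heq : (fun μ : ProbabilityMeasure X => (μ : Measure X) (⋃ i, f i))
        = fun μ : ProbabilityMeasure X => ∑' i, (μ : Measure X) (f i) := by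
      funext μ; exact measure_iUnion hdisj hfm
    rw [heq]
    exact Measurable.ennreal_tsum hC

lemma variance_aux {α : Type*} [MeasurableSpace α] (κ : Measure α) [IsProbabilityMeasure κ]
    {φ : α → ℝ} (hφ : Measurable φ) {C : ℝ} (hC : ∀ x, |φ x| ≤ C) :
    ENNReal.ofReal ((∫ x, φ x ∂κ) ^ 2) ≤ ∫⁻ x, ENNReal.ofReal (φ x ^ 2) ∂κ ∧
      (ENNReal.ofReal ((∫ x, φ x ∂κ) ^ 2) = ∫⁻ x, ENNReal.ofReal (φ x ^ 2) ∂κ →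
        ∀ᵐ x ∂κ, φ x = ∫ y, φ y ∂κ) := by
  have hint : Integrable φ κ := by
    refine (integrable_const C).mono' hφ.aestronglyMeasurable ?_
    exact Filter.Eventually.of_forall fun x => by simpa using hC x
  have hint2 : Integrable (fun x => φ x ^ 2) κ := by
    refine (integrable_const (C ^ 2)).mono' (hφ.pow_const 2).aestronglyMeasurable ?_
    refine Filter.Eventually.of_forall fun x => ?_
    rw [Real.norm_eq_abs, abs_pow]
    exact pow_le_pow_left₀ (abs_nonneg _) (hC x) 2
  set c : ℝ := ∫ x, φ x ∂κ with hc
  have key : ∫ x, (φ x - c) ^ 2 ∂κ = (∫ x, φ x ^ 2 ∂κ) - c ^ 2 := by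
    have e1 : ∀ x, (φ x - c) ^ 2 = (φ x ^ 2 - (2 * c) * φ x) + c ^ 2 := fun x => by ring
    have hint4 : Integrable (fun x => φ x ^ 2 - 2 * c * φ x) κ :=
      hint2.sub (hint.const_mul (2 * c))
    simp_rw [e1]
    rw [integral_add hint4 (integrable_const _),
      integral_sub hint2 (hint.const_mul (2 * c)), MeasureTheory.integral_const_mul,
      integral_const]
    simp [← hc]
    ring
  have hnn : 0 ≤ ∫ x, (φ x - c) ^ 2 ∂κ := integral_nonneg fun x => sq_nonneg _
  have hle : c ^ 2 ≤ ∫ x, φ x ^ 2 ∂κ := by linarith [key ▸ hnn]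
  have hlre : ∫⁻ x, ENNReal.ofReal (φ x ^ 2) ∂κ = ENNReal.ofReal (∫ x, φ x ^ 2 ∂κ) :=
    (ofReal_integral_eq_lintegral_ofReal hint2
      (Filter.Eventually.of_forall fun x => sq_nonneg _)).symm
  constructor
  · rw [hlre]
    exact ENNReal.ofReal_le_ofReal hle
  · intro heq
    rw [hlre] at heq
    have h2 : c ^ 2 = ∫ x, φ x ^ 2 ∂κ :=
      (ENNReal.ofReal_eq_ofReal_iff (sq_nonneg c) (le_trans (sq_nonneg c) hle)).mp heq
    have hzero : ∫ x, (φ x - c) ^ 2 ∂κ = 0 := by rw [key]; linarith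
    have hae : (fun x => (φ x - c) ^ 2) =ᵐ[κ] 0 := by
      refine (integral_eq_zero_iff_of_nonneg (fun x => sq_nonneg _) ?_).mp hzero
      have heq2 : (fun x => (φ x - c) ^ 2) = fun x => (φ x ^ 2 - 2 * c * φ x) + c ^ 2 :=
        funext fun x => by ring
      rw [heq2]
      exact (hint2.sub (hint.const_mul _)).add (integrable_const _)
    filter_upwards [hae] with x hx
    have hx0 : (φ x - c) ^ 2 = 0 := hx
    have : φ x - c = 0 := by
      simpa [pow_eq_zero_iff] using hx0
    linarith

lemma eq_dirac_of_sep {α : Type*} [MeasurableSpace α] [MeasurableSingletonClass α]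
    (κ : Measure α) [IsProbabilityMeasure κ] {ι : Type*} [Countable ι]
    {g : ι → α → ℝ} (hsep : ∀ x y, (∀ i, g i x = g i y) → x = y)
    (h : ∀ i, ∃ c : ℝ, ∀ᵐ x ∂κ, g i x = c) :
    ∃ a : α, κ = Measure.dirac a := by
  choose c hc using h
  have hall : ∀ᵐ x ∂κ, ∀ i, g i x = c i := ae_all_iff.mpr hc
  set s : Set α := {x | ∀ i, g i x = c i} with hs
  have hsc : κ sᶜ = 0 := hall
  have hsne : s.Nonempty := by
    by_contra hne
    rw [Set.not_nonempty_iff_eq_empty] at hne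
    rw [hne, Set.compl_empty] at hsc
    simp [measure_univ] at hsc
  obtain ⟨a, ha⟩ := hsne
  have hss : s ⊆ {a} := by
    intro x hx
    have : x = a := hsep x a fun i => (hx i).trans (ha i).symm
    simp [this]
  refine ⟨a, ?_⟩
  have hac : κ {a}ᶜ = 0 := measure_mono_null (Set.compl_subset_compl.mpr hss) hsc
  ext t ht
  rw [Measure.dirac_apply' a ht]
  by_cases hat : a ∈ t
  · have h1 : κ tᶜ = 0 := by
      refine measure_mono_null ?_ hac
      intro x hx
      simp only [Set.mem_compl_iff, Set.mem_singleton_iff] at *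
      intro hxa; exact hx (hxa ▸ hat)
    have htot := measure_add_measure_compl (μ := κ) ht
    rw [h1, add_zero, measure_univ] at htot
    simp [htot, Set.indicator_of_mem hat]
  · have h1 : κ t = 0 := by
      refine measure_mono_null ?_ hac
      intro x hx
      simp only [Set.mem_compl_iff, Set.mem_singleton_iff]
      intro hxa; exact hat (hxa ▸ hx)
    simp [h1, Set.indicator_of_notMem hat]

/-- `ν` is an `L^r`-random Dirac mass: there is `u ∈ L^r(Ω×Q; E)` with
`ν_ω = δ_{u(ω,z)} ⊗ λ` almost surely, the joint measure on `Q × E` being the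
pushforward of `λ` under `z ↦ (z, u(ω,z))`. -/
def IsLrRandomDiracMass {m : ℕ} {Q : Type*} [MeasurableSpace Q]
    (E : Set (EuclideanSpace ℝ (Fin m))) (lam : Measure Q) (r : ℝ)
    {Ω : Type*} [MeasurableSpace Ω] (P : Measure Ω)
    (ν : Ω → ProbabilityMeasure (Q × ↥E)) : Prop :=
  ∃ u : Ω → Q → ↥E,
    Measurable (fun p : Ω × Q => u p.1 p.2) ∧
    (∫⁻ ω, ∫⁻ z, ENNReal.ofReal (‖(u ω z : EuclideanSpace ℝ (Fin m))‖ ^ r) ∂lam ∂P) < ⊤ ∧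
    ∀ᵐ ω ∂P, ((ν ω : Measure (Q × ↥E))) = lam.map (fun z => (z, u ω z))

/-- Being an `L^r`-random Dirac mass depends only on the law of the random Young
measure: if `ν` and `ν'` have the same law and `ν` is an `L^r`-random Dirac mass,
then so is `ν'`. -/
theorem stmt15 {m : ℕ} (r : ℝ) (hr : 1 ≤ r)
    (Q : Type*) [MetricSpace Q] [CompactSpace Q] [SecondCountableTopology Q]
    [MeasurableSpace Q] [BorelSpace Q]
    (lam : Measure Q) [IsProbabilityMeasure lam]
    (E : Set (EuclideanSpace ℝ (Fin m))) (hE : IsClosed E)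
    (Ω Ω' : Type*) [MeasurableSpace Ω] [MeasurableSpace Ω']
    (P : Measure Ω) [IsProbabilityMeasure P] (P' : Measure Ω') [IsProbabilityMeasure P']
    (ν : Ω → ProbabilityMeasure (Q × ↥E)) (ν' : Ω' → ProbabilityMeasure (Q × ↥E))
    [MeasurableSpace (ProbabilityMeasure (Q × ↥E))]
    [BorelSpace (ProbabilityMeasure (Q × ↥E))]
    (hmeas : Measurable ν) (hmeas' : Measurable ν')
    (hYoung : ∀ ω, ((ν ω : Measure (Q × ↥E))).map Prod.fst = lam)
    (hYoung' : ∀ ω, ((ν' ω : Measure (Q × ↥E))).map Prod.fst = lam)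
    (hlaw : P.map ν = P'.map ν')
    (hDirac : IsLrRandomDiracMass E lam r P ν) :
    IsLrRandomDiracMass E lam r P' ν' := by
  classical
  obtain ⟨u, humeas, humom, huD⟩ := hDirac
  haveI : PolishSpace ↥E := hE.polishSpace
  -- nonemptiness
  haveI hΩ' : Nonempty Ω' := by
    by_contra h
    rw [not_nonempty_iff] at h
    have h1 : P' Set.univ = 1 := measure_univ
    rw [Set.univ_eq_empty_iff.mpr h] at h1
    simp at h1
  haveI hEne : Nonempty ↥E := by
    have hne : Nonempty (Q × ↥E) := by
      by_contra h
      rw [not_nonempty_iff] at h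
      have h1 : (ν' (Classical.arbitrary Ω') : Measure (Q × ↥E)) Set.univ = 1 := measure_univ
      rw [Set.univ_eq_empty_iff.mpr h] at h1
      simp at h1
    exact ⟨hne.some.2⟩
  have x₀ : ↥E := Classical.arbitrary _
  -- the evaluation kernel and the universal disintegration kernel
  have htm : Measurable fun μ : ProbabilityMeasure (Q × ↥E) => (μ : Measure (Q × ↥E)) :=
    pm_coe_meas
  let K : Kernel (ProbabilityMeasure (Q × ↥E)) (Q × ↥E) := ⟨fun μ => (μ : Measure _), htm⟩
  haveI hK : IsMarkovKernel K := ⟨fun μ => μ.2⟩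
  let η : Kernel (ProbabilityMeasure (Q × ↥E) × Q) ↥E := K.condKernel
  haveI : IsMarkovKernel η := by unfold η; infer_instance
  -- disintegration of every Young measure through η
  have hdis : ∀ μ : ProbabilityMeasure (Q × ↥E), (μ : Measure (Q × ↥E)).map Prod.fst = lam →
      (μ : Measure (Q × ↥E))
        = lam ⊗ₘ (η.comap (fun z => (μ, z)) measurable_prodMk_left) := by
    intro μ hμ
    have h0 : (K.fst ⊗ₖ η) μ = K μ := by rw [K.disintegrate K.condKernel]
    have hfst : K.fst μ = lam := by rw [Kernel.fst_apply]; exact hμ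
    ext s hs
    rw [Measure.compProd_apply hs]
    have h1 := Kernel.compProd_apply hs K.fst η μ
    rw [h0, hfst] at h1
    simp_rw [Kernel.comap_apply]
    exact h1
  -- computing the pushforward measure of a graph map
  have hmapd : ∀ (w : Q → ↥E), Measurable w → ∀ s : Set (Q × ↥E), MeasurableSet s →
      ∫⁻ z, Measure.dirac (w z) (Prod.mk z ⁻¹' s) ∂lam
        = (lam.map fun z => (z, w z)) s := by
    intro w hw s hs
    have hgw : Measurable fun z : Q => (z, w z) := measurable_id.prodMk hw
    rw [Measure.map_apply hgw hs]
    have hpre : ∀ z : Q, Measure.dirac (w z) (Prod.mk z ⁻¹' s)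
        = Set.indicator ((fun z => (z, w z)) ⁻¹' s) (fun _ => (1 : ℝ≥0∞)) z := by
      intro z
      rw [Measure.dirac_apply' _ (measurable_prodMk_left hs)]
      simp [Set.indicator_apply, Set.mem_preimage]
    simp_rw [hpre]
    rw [lintegral_indicator (hgw hs)]
    simp
  -- uniqueness: if μ is a graph measure then η gives Diracs
  have huniq : ∀ (μ : ProbabilityMeasure (Q × ↥E)) (w : Q → ↥E), Measurable w →
      (μ : Measure (Q × ↥E)) = lam.map (fun z => (z, w z)) →
      ∀ᵐ z ∂lam, η (μ, z) = Measure.dirac (w z) := by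
    intro μ w hw hmap
    have hμfst : (μ : Measure (Q × ↥E)).map Prod.fst = lam := by
      have hgw : Measurable fun z : Q => (z, w z) := measurable_id.prodMk hw
      rw [hmap, Measure.map_map measurable_fst hgw]
      simp [Function.comp_def]
    have hfst : (μ : Measure (Q × ↥E)).fst = lam := hμfst
    have h1 : (μ : Measure (Q × ↥E))
        = (μ : Measure (Q × ↥E)).fst ⊗ₘ (η.comap (fun z => (μ, z)) measurable_prodMk_left) := by
      rw [hfst]; exact hdis μ hμfst
    have h2 : (μ : Measure (Q × ↥E))
        = (μ : Measure (Q × ↥E)).fst ⊗ₘ Kernel.deterministic w hw := by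
      rw [hfst]
      ext s hs
      rw [Measure.compProd_apply hs, hmap]
      simp_rw [Kernel.deterministic_apply]
      rw [hmapd w hw s hs]
    have e1 := ProbabilityTheory.eq_condKernel_of_measure_eq_compProd _ h1
    have e2 := ProbabilityTheory.eq_condKernel_of_measure_eq_compProd _ h2
    rw [hfst] at e1 e2
    filter_upwards [e1, e2] with z hz1 hz2
    rw [Kernel.comap_apply] at hz1
    rw [hz1, ← hz2, Kernel.deterministic_apply]
  -- the separating family
  let φ : Fin m → ↥E → ℝ := fun i x => Real.arctan ((x : EuclideanSpace ℝ (Fin m)) i)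
  have hφc : ∀ i, Continuous (φ i) := fun i =>
    Real.continuous_arctan.comp ((continuous_apply i).comp ((PiLp.continuous_ofLp ..).comp continuous_subtype_val))
  have hφm : ∀ i, Measurable (φ i) := fun i => (hφc i).measurable
  have hφb : ∀ i x, |φ i x| ≤ 2 := by
    intro i x
    have h1 : |Real.arctan ((x : EuclideanSpace ℝ (Fin m)) i)| < Real.pi / 2 :=
      abs_lt.mpr ⟨Real.neg_pi_div_two_lt_arctan _, Real.arctan_lt_pi_div_two _⟩
    have h2 : Real.pi / 2 ≤ 2 := by
      have := Real.pi_le_four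
      linarith
    exact le_trans h1.le h2
  have hsep : ∀ x y : ↥E, (∀ i, φ i x = φ i y) → x = y := by
    intro x y hxy
    apply Subtype.ext
    ext i
    exact Real.arctan_injective (hxy i)
  -- the two law-determined functionals
  let T : Fin m → ProbabilityMeasure (Q × ↥E) → ℝ≥0∞ := fun i μ =>
    ∫⁻ p, ENNReal.ofReal (φ i p.2 ^ 2) ∂(μ : Measure (Q × ↥E))
  let g : Fin m → ProbabilityMeasure (Q × ↥E) × Q → ℝ := fun i q => ∫ x, φ i x ∂(η q)
  have hgm : ∀ i, Measurable (g i) := by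
    intro i
    have : StronglyMeasurable fun p : (ProbabilityMeasure (Q × ↥E) × Q) × ↥E => φ i p.2 :=
      ((hφc i).comp continuous_snd).stronglyMeasurable
    exact (this.integral_kernel_prod_right').measurable
  let S : Fin m → ProbabilityMeasure (Q × ↥E) → ℝ≥0∞ := fun i μ =>
    ∫⁻ z, ENNReal.ofReal (g i (μ, z) ^ 2) ∂lam
  have hTi : ∀ i, Measurable fun p : Q × ↥E => ENNReal.ofReal (φ i p.2 ^ 2) := fun i =>
    ENNReal.measurable_ofReal.comp (((hφm i).comp measurable_snd).pow_const 2)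
  have hTm : ∀ i, Measurable (T i) := fun i =>
    (Measure.measurable_lintegral (hTi i)).comp htm
  have hSm : ∀ i, Measurable (S i) := by
    intro i
    have h1 : Measurable fun q : ProbabilityMeasure (Q × ↥E) × Q =>
        ENNReal.ofReal (g i q ^ 2) :=
      ENNReal.measurable_ofReal.comp ((hgm i).pow_const 2)
    exact h1.lintegral_prod_right'
  -- the measurable invariant set
  let M : Set (ProbabilityMeasure (Q × ↥E)) := {μ | ∀ i, T i μ = S i μ}
  have hM : MeasurableSet M := by
    have : M = ⋂ i, {μ | T i μ = S i μ} := by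
      ext μ; simp [M, Set.mem_iInter]
    rw [this]
    exact MeasurableSet.iInter fun i => measurableSet_eq_fun (hTm i) (hSm i)
  -- on the unprimed side, a.e. ν ω ∈ M
  have hMae : ∀ᵐ ω ∂P, ν ω ∈ M := by
    filter_upwards [huD] with ω hω
    intro i
    have hw : Measurable (u ω) := humeas.comp measurable_prodMk_left
    have hdz := huniq (ν ω) (u ω) hw hω
    have hT : T i (ν ω) = ∫⁻ z, ENNReal.ofReal (φ i (u ω z) ^ 2) ∂lam := by
      show (∫⁻ p, ENNReal.ofReal (φ i p.2 ^ 2) ∂(ν ω : Measure (Q × ↥E))) = _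
      have hgw : Measurable fun z : Q => (z, u ω z) := measurable_id.prodMk hw
      rw [hω, lintegral_map (hTi i) hgw]
    have hS : S i (ν ω) = ∫⁻ z, ENNReal.ofReal (φ i (u ω z) ^ 2) ∂lam := by
      refine lintegral_congr_ae ?_
      filter_upwards [hdz] with z hz
      have : g i (ν ω, z) = φ i (u ω z) := by
        show (∫ x, φ i x ∂(η (ν ω, z))) = _
        rw [hz, integral_dirac]
      rw [this]
    rw [hT, hS]
  -- transfer of M along equal laws
  have hMae' : ∀ᵐ ω' ∂P', ν' ω' ∈ M := by
    have h0 : P (ν ⁻¹' Mᶜ) = 0 := by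
      have := hMae
      rwa [ae_iff] at this
    have h1 : P' (ν' ⁻¹' Mᶜ) = 0 := by
      have e1 : P (ν ⁻¹' Mᶜ) = (P.map ν) Mᶜ := (Measure.map_apply hmeas hM.compl).symm
      have e2 : P' (ν' ⁻¹' Mᶜ) = (P'.map ν') Mᶜ := (Measure.map_apply hmeas' hM.compl).symm
      rw [e2, ← hlaw, ← e1, h0]
    rwa [ae_iff]
  -- a.e. Dirac on the primed side
  have hdirac' : ∀ᵐ ω' ∂P', ∀ᵐ z ∂lam, ∃ c : ↥E, η (ν' ω', z) = Measure.dirac c := by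
    filter_upwards [hMae'] with ω' hω'
    have hdisω : (ν' ω' : Measure (Q × ↥E))
        = lam ⊗ₘ (η.comap (fun z => (ν' ω', z)) measurable_prodMk_left) :=
      hdis (ν' ω') (hYoung' ω')
    have haeeq : ∀ i : Fin m, ∀ᵐ z ∂lam,
        ENNReal.ofReal (g i (ν' ω', z) ^ 2)
          = ∫⁻ x, ENNReal.ofReal (φ i x ^ 2) ∂(η (ν' ω', z)) := by
      intro i
      have hTeq : T i (ν' ω') = ∫⁻ z, ∫⁻ x, ENNReal.ofReal (φ i x ^ 2)
          ∂(η (ν' ω', z)) ∂lam := by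
        show (∫⁻ p, ENNReal.ofReal (φ i p.2 ^ 2) ∂(ν' ω' : Measure (Q × ↥E))) = _
        rw [hdisω, Measure.lintegral_compProd (hTi i)]
        simp_rw [Kernel.comap_apply]
      have hkey : (∫⁻ z, ENNReal.ofReal (g i (ν' ω', z) ^ 2) ∂lam)
          = ∫⁻ z, ∫⁻ x, ENNReal.ofReal (φ i x ^ 2) ∂(η (ν' ω', z)) ∂lam := by
        have h := hω' i
        rw [hTeq] at h
        exact h.symm
      -- pointwise ≤, plus equal integrals, plus finiteness
      have hle : ∀ z, ENNReal.ofReal (g i (ν' ω', z) ^ 2)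
          ≤ ∫⁻ x, ENNReal.ofReal (φ i x ^ 2) ∂(η (ν' ω', z)) := fun z =>
        (variance_aux (η (ν' ω', z)) (hφm i) (hφb i)).1
      have hfin : (∫⁻ z, ∫⁻ x, ENNReal.ofReal (φ i x ^ 2) ∂(η (ν' ω', z)) ∂lam) ≠ ⊤ := by
        have hb : ∀ z, (∫⁻ x, ENNReal.ofReal (φ i x ^ 2) ∂(η (ν' ω', z)))
            ≤ ENNReal.ofReal 4 := by
          intro z
          calc ∫⁻ x, ENNReal.ofReal (φ i x ^ 2) ∂(η (ν' ω', z))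
              ≤ ∫⁻ _, ENNReal.ofReal 4 ∂(η (ν' ω', z)) := by
                refine lintegral_mono fun x => ENNReal.ofReal_le_ofReal ?_
                have := hφb i x
                nlinarith [abs_nonneg (φ i x), sq_abs (φ i x)]
            _ = ENNReal.ofReal 4 := by simp
        refine ne_of_lt (lt_of_le_of_lt (lintegral_mono hb) ?_)
        rw [lintegral_const, measure_univ, mul_one]
        exact ENNReal.ofReal_lt_top
      -- from equality of integrals and pointwise inequality, deduce a.e. equality
      have hBm : Measurable fun z => ENNReal.ofReal (g i (ν' ω', z) ^ 2) :=
        ENNReal.measurable_ofReal.comp (((hgm i).comp measurable_prodMk_left).pow_const 2)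
      have hAm : Measurable fun z => ∫⁻ x, ENNReal.ofReal (φ i x ^ 2) ∂(η (ν' ω', z)) := by
        have h := (hTi i).lintegral_kernel_prod_right'
          (κ := η.comap (fun z : Q => (ν' ω', z)) measurable_prodMk_left)
        simpa [Kernel.comap_apply] using h
      have hBfin : (∫⁻ z, ENNReal.ofReal (g i (ν' ω', z) ^ 2) ∂lam) ≠ ⊤ := by
        rw [hkey]; exact hfin
      have hsub0 : ∫⁻ z, ((∫⁻ x, ENNReal.ofReal (φ i x ^ 2) ∂(η (ν' ω', z)))
          - ENNReal.ofReal (g i (ν' ω', z) ^ 2)) ∂lam = 0 := by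
        rw [lintegral_sub hBm hBfin (Filter.Eventually.of_forall hle), ← hkey, tsub_self]
      have h0 := (lintegral_eq_zero_iff (hAm.sub hBm)).mp hsub0
      filter_upwards [h0] with z hz
      have hz' : (∫⁻ x, ENNReal.ofReal (φ i x ^ 2) ∂(η (ν' ω', z)))
          - ENNReal.ofReal (g i (ν' ω', z) ^ 2) = 0 := hz
      exact le_antisymm (hle z) (tsub_eq_zero_iff_le.mp hz')
    have hall : ∀ᵐ z ∂lam, ∀ i : Fin m,
        ENNReal.ofReal (g i (ν' ω', z) ^ 2)
          = ∫⁻ x, ENNReal.ofReal (φ i x ^ 2) ∂(η (ν' ω', z)) := ae_all_iff.mpr haeeq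
    filter_upwards [hall] with z hz
    refine eq_dirac_of_sep (η (ν' ω', z)) hsep fun i => ?_
    refine ⟨∫ x, φ i x ∂(η (ν' ω', z)), ?_⟩
    exact (variance_aux (η (ν' ω', z)) (hφm i) (hφb i)).2 (hz i)
  -- the barycenter selection
  have hbsm : StronglyMeasurable fun q : ProbabilityMeasure (Q × ↥E) × Q =>
      ∫ x, (x : EuclideanSpace ℝ (Fin m)) ∂(η q) :=
    StronglyMeasurable.integral_kernel_prod_right'
      (κ := η) (continuous_subtype_val.comp continuous_snd).stronglyMeasurable
  set b : ProbabilityMeasure (Q × ↥E) × Q → EuclideanSpace ℝ (Fin m) :=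
    fun q => ∫ x, (x : EuclideanSpace ℝ (Fin m)) ∂(η q) with hbdef
  have hbm : Measurable b := hbsm.measurable
  have hmem : ∀ q, (if b q ∈ E then b q else (x₀ : EuclideanSpace ℝ (Fin m))) ∈ E := by
    intro q; split_ifs with h; exacts [h, x₀.2]
  set v : ProbabilityMeasure (Q × ↥E) × Q → ↥E := fun q => ⟨_, hmem q⟩ with hvdef
  have hvm : Measurable v := by
    refine Measurable.subtype_mk ?_
    exact Measurable.ite (hbm hE.measurableSet) hbm measurable_const
  have hvd : ∀ (q : ProbabilityMeasure (Q × ↥E) × Q) (c : ↥E),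
      η q = Measure.dirac c → v q = c := by
    intro q c h
    have hb : b q = (c : EuclideanSpace ℝ (Fin m)) := by
      rw [hbdef]
      simp only []
      rw [h, integral_dirac]
    apply Subtype.ext
    show (if b q ∈ E then b q else (x₀ : EuclideanSpace ℝ (Fin m))) = (c : EuclideanSpace ℝ (Fin m))
    rw [hb]
    exact if_pos c.2
  -- the candidate function
  have hu'm : Measurable fun p : Ω' × Q => v (ν' p.1, p.2) :=
    hvm.comp ((hmeas'.comp measurable_fst).prodMk measurable_snd)
  have hdirac2 : ∀ᵐ ω' ∂P', ∀ᵐ z ∂lam, η (ν' ω', z) = Measure.dirac (v (ν' ω', z)) := by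
    filter_upwards [hdirac'] with ω' h
    filter_upwards [h] with z hc
    obtain ⟨c, hc⟩ := hc
    rw [hvd _ _ hc]
    exact hc
  have hmap' : ∀ᵐ ω' ∂P',
      (ν' ω' : Measure (Q × ↥E)) = lam.map (fun z => (z, v (ν' ω', z))) := by
    filter_upwards [hdirac2] with ω' hz
    have hw : Measurable fun z => v (ν' ω', z) := hvm.comp measurable_prodMk_left
    ext s hs
    rw [hdis (ν' ω') (hYoung' ω'), Measure.compProd_apply hs, ← hmapd _ hw s hs]
    refine lintegral_congr_ae ?_
    filter_upwards [hz] with z h1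
    rw [Kernel.comap_apply, h1]
  -- assemble
  refine ⟨fun ω' z => v (ν' ω', z), hu'm, ?_, hmap'⟩
  -- the moment bound transfers through the law
  have hFi : Measurable fun p : Q × ↥E =>
      ENNReal.ofReal (‖(p.2 : EuclideanSpace ℝ (Fin m))‖ ^ r) := by
    have hc : Continuous fun p : Q × ↥E => ‖(p.2 : EuclideanSpace ℝ (Fin m))‖ ^ r :=
      (Real.continuous_rpow_const (le_trans zero_le_one hr)).comp
        ((continuous_subtype_val.comp continuous_snd).norm)
    exact ENNReal.measurable_ofReal.comp hc.measurable
  set F : ProbabilityMeasure (Q × ↥E) → ℝ≥0∞ := fun μ =>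
    ∫⁻ p, ENNReal.ofReal (‖(p.2 : EuclideanSpace ℝ (Fin m))‖ ^ r) ∂(μ : Measure (Q × ↥E))
    with hFdef
  have hFm : Measurable F := (Measure.measurable_lintegral hFi).comp htm
  have e1 : ∀ᵐ ω' ∂P', (∫⁻ z, ENNReal.ofReal
      (‖(v (ν' ω', z) : EuclideanSpace ℝ (Fin m))‖ ^ r) ∂lam) = F (ν' ω') := by
    filter_upwards [hmap'] with ω' hm
    have hw : Measurable fun z => v (ν' ω', z) := hvm.comp measurable_prodMk_left
    have hgw : Measurable fun z : Q => (z, v (ν' ω', z)) := measurable_id.prodMk hw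
    rw [hFdef]
    simp only []
    rw [hm, lintegral_map hFi hgw]
  have e2 : ∀ᵐ ω ∂P, F (ν ω) = ∫⁻ z, ENNReal.ofReal
      (‖(u ω z : EuclideanSpace ℝ (Fin m))‖ ^ r) ∂lam := by
    filter_upwards [huD] with ω hm
    have hw : Measurable (u ω) := humeas.comp measurable_prodMk_left
    have hgw : Measurable fun z : Q => (z, u ω z) := measurable_id.prodMk hw
    rw [hFdef]
    simp only []
    rw [hm, lintegral_map hFi hgw]
  calc ∫⁻ ω', ∫⁻ z, ENNReal.ofReal
        (‖(v (ν' ω', z) : EuclideanSpace ℝ (Fin m))‖ ^ r) ∂lam ∂P'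
      = ∫⁻ ω', F (ν' ω') ∂P' := lintegral_congr_ae e1
    _ = ∫⁻ μ, F μ ∂(P'.map ν') := (lintegral_map hFm hmeas').symm
    _ = ∫⁻ μ, F μ ∂(P.map ν) := by rw [hlaw]
    _ = ∫⁻ ω, F (ν ω) ∂P := lintegral_map hFm hmeas
    _ = ∫⁻ ω, ∫⁻ z, ENNReal.ofReal
        (‖(u ω z : EuclideanSpace ℝ (Fin m))‖ ^ r) ∂lam ∂P := lintegral_congr_ae e2
    _ < ⊤ := humom
end

section
/- Suppose the functional equation 2λ(⟨χ(v)u⟩⟨χ(v')⟩ − ⟨χ(v)⟩⟨χ(v')u⟩) = (v−v')(⟨χ(v)χ(v')⟩ − ⟨χ(v)⟩⟨χ(v')⟩) holds for all v, v' ∈ ℝ for a probability measure ν on ℝ₊×ℝ of the form ν = μ + α δ_{(ρ̄,ū)} with ρ̄ > 0, where μ is supported in the vacuum region V = {ρ = 0} and α ∈ [0,1]. Then α = 0 or α = 1. -/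
open MeasureTheory

/-- `χ(U,v) = (v - z)₊^λ (w - v)₊^λ` with `z = u - ρ^θ`, `w = u + ρ^θ`, `U = (ρ,u)`. -/
noncomputable def chiFn (θ lam : ℝ) (U : ℝ × ℝ) (v : ℝ) : ℝ :=
  max (v - (U.2 - U.1 ^ θ)) 0 ^ lam * max ((U.2 + U.1 ^ θ) - v) 0 ^ lam

lemma chi_meas (θ lam v : ℝ) : Measurable (fun U : ℝ × ℝ => chiFn θ lam U v) := by
  unfold chiFn; fun_prop

lemma chi_vac (θ lam : ℝ) (hθ : 0 < θ) (hlam : 0 < lam) (U : ℝ × ℝ) (hU : U.1 = 0)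
    (v : ℝ) : chiFn θ lam U v = 0 := by
  unfold chiFn
  rw [hU, Real.zero_rpow hθ.ne']
  rcases le_total v U.2 with h | h
  · rw [max_eq_right (by linarith), Real.zero_rpow hlam.ne', zero_mul]
  · have h2 : max (U.2 + 0 - v) 0 = 0 := max_eq_right (by linarith)
    rw [h2, Real.zero_rpow hlam.ne', mul_zero]

lemma chi_pos (θ lam : ℝ) (hlam : 0 < lam) (ρ u v : ℝ) (h1 : u - ρ ^ θ < v)
    (h2 : v < u + ρ ^ θ) : 0 < chiFn θ lam (ρ, u) v := by
  unfold chiFn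
  apply mul_pos
  · exact Real.rpow_pos_of_pos (lt_max_of_lt_left (by simp; linarith)) _
  · exact Real.rpow_pos_of_pos (lt_max_of_lt_left (by simp; linarith)) _

lemma nu_int (μ : Measure (ℝ × ℝ)) (α : ℝ) (hα0 : 0 ≤ α) (ρb ub : ℝ)
    (hvac : μ {U : ℝ × ℝ | U.1 ≠ 0} = 0)
    (f : ℝ × ℝ → ℝ) (hf : Measurable f) (hf0 : ∀ U : ℝ × ℝ, U.1 = 0 → f U = 0) :
    ∫ U, f U ∂(μ + ENNReal.ofReal α • Measure.dirac (ρb, ub)) = α * f (ρb, ub) := by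
  have hμ0 : f =ᵐ[μ] 0 := by
    have hmem : {U : ℝ × ℝ | U.1 = 0} ∈ ae μ := by
      simpa [mem_ae_iff, Set.compl_setOf] using hvac
    filter_upwards [hmem] with U hU using hf0 U hU
  have hint1 : Integrable f μ := (integrable_zero _ _ _).congr hμ0.symm
  have hint2 : Integrable f (ENNReal.ofReal α • Measure.dirac (ρb, ub)) := by
    refine ⟨(hf.aestronglyMeasurable), ?_⟩
    rw [HasFiniteIntegral, lintegral_smul_measure, lintegral_dirac]
    exact ENNReal.mul_lt_top ENNReal.ofReal_lt_top (by simp)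
  rw [integral_add_measure hint1 hint2, integral_congr_ae hμ0,
    integral_smul_measure, integral_dirac, ENNReal.toReal_ofReal hα0]
  simp

/-- If the functional equation
`2λ(⟨χ(v)u⟩⟨χ(v')⟩ − ⟨χ(v)⟩⟨χ(v')u⟩) = (v−v')(⟨χ(v)χ(v')⟩ − ⟨χ(v)⟩⟨χ(v')⟩)` holds
for all `v, v'` for a probability measure `ν = μ + α δ_{(ρ̄,ū)}` with `ρ̄ > 0` and
`μ` supported in the vacuum region `{ρ = 0}`, then `α = 0` or `α = 1`. -/
theorem stmt16 (θ lam : ℝ) (hθ : 0 < θ) (hlam : 0 < lam)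
    (μ : Measure (ℝ × ℝ)) (α : ℝ) (hα : α ∈ Set.Icc (0 : ℝ) 1)
    (ρb ub : ℝ) (hρb : 0 < ρb)
    (ν : Measure (ℝ × ℝ))
    (hν : ν = μ + ENNReal.ofReal α • Measure.dirac (ρb, ub))
    (hvac : μ {U : ℝ × ℝ | U.1 ≠ 0} = 0)
    (hprob : IsProbabilityMeasure ν)
    (hfe : ∀ v v' : ℝ,
      2 * lam * ((∫ U, chiFn θ lam U v * U.2 ∂ν) * (∫ U, chiFn θ lam U v' ∂ν) -
          (∫ U, chiFn θ lam U v ∂ν) * (∫ U, chiFn θ lam U v' * U.2 ∂ν)) =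
        (v - v') * ((∫ U, chiFn θ lam U v * chiFn θ lam U v' ∂ν) -
          (∫ U, chiFn θ lam U v ∂ν) * (∫ U, chiFn θ lam U v' ∂ν))) :
    α = 0 ∨ α = 1 := by
  subst hν
  have hα0 := hα.1
  have I1 : ∀ v : ℝ, (∫ U, chiFn θ lam U v ∂(μ + ENNReal.ofReal α • Measure.dirac (ρb, ub)))
      = α * chiFn θ lam (ρb, ub) v := fun v =>
    nu_int μ α hα0 ρb ub hvac _ (chi_meas θ lam v)
      (fun U hU => chi_vac θ lam hθ hlam U hU v)
  have I2 : ∀ v : ℝ, (∫ U, chiFn θ lam U v * U.2 ∂(μ + ENNReal.ofReal α • Measure.dirac (ρb, ub)))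
      = α * (chiFn θ lam (ρb, ub) v * ub) := fun v =>
    nu_int μ α hα0 ρb ub hvac _ ((chi_meas θ lam v).mul measurable_snd)
      (fun U hU => by rw [chi_vac θ lam hθ hlam U hU v, zero_mul])
  have I3 : ∀ v v' : ℝ,
      (∫ U, chiFn θ lam U v * chiFn θ lam U v' ∂(μ + ENNReal.ofReal α • Measure.dirac (ρb, ub)))
      = α * (chiFn θ lam (ρb, ub) v * chiFn θ lam (ρb, ub) v') := fun v v' =>
    nu_int μ α hα0 ρb ub hvac _ ((chi_meas θ lam v).mul (chi_meas θ lam v'))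
      (fun U hU => by rw [chi_vac θ lam hθ hlam U hU v, zero_mul])
  have hp : 0 < ρb ^ θ := Real.rpow_pos_of_pos hρb θ
  set v : ℝ := ub with hv
  set v' : ℝ := ub + ρb ^ θ / 2 with hv'
  have key := hfe v v'
  rw [I1, I1, I2, I2, I3] at key
  have hc : 0 < chiFn θ lam (ρb, ub) v :=
    chi_pos θ lam hlam ρb ub v (by rw [hv]; linarith) (by rw [hv]; linarith)
  have hc' : 0 < chiFn θ lam (ρb, ub) v' :=
    chi_pos θ lam hlam ρb ub v' (by rw [hv']; linarith) (by rw [hv']; linarith)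
  have key2 : (v - v') * (chiFn θ lam (ρb, ub) v * chiFn θ lam (ρb, ub) v') * (α * (1 - α)) = 0 := by
    nlinarith [key]
  have hvv : v - v' ≠ 0 := by rw [hv, hv']; intro h; nlinarith
  rcases mul_eq_zero.mp key2 with h | h
  · exact absurd h (mul_ne_zero hvv (by positivity))
  · rcases mul_eq_zero.mp h with h0 | h1
    · exact Or.inl h0
    · exact Or.inr (by linarith)
end
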